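/- The paired predicate pp2 introduced by Predicate Pairing with abstraction denotes the empty relation; semantically: for all integers a, b, c, d, e, f, g, h, k, m, n, o, p, if a ≤ b - 1, k = a + c, s12(a,b,c,d,e,f,g,h) and s23(a,b,k,d,m,n,o,p) all hold, then g ≥ o (equivalently, the constraint g ≤ o - 1 together with these hypotheses is unsatisfiable). -/
import Mathlib


/-- CHC encoding of the loop of program P1. -/
inductive s12 : ℤ → ℤ → ℤ → ℤ → ℤ → ℤ → ℤ → ℤ → Prop
  | base (a b x y : ℤ) (h : a ≥ b) : s12 a b x y a b x y
  | step (a b x y a2 b2 x2 y2 : ℤ) (h : a ≤ b - 1)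
      (ih : s12 (a + 1) b (x + a) (y + x + a) a2 b2 x2 y2) :
      s12 a b x y a2 b2 x2 y2

/-- CHC encoding of the loop of program P2. -/
inductive s23 : ℤ → ℤ → ℤ → ℤ → ℤ → ℤ → ℤ → ℤ → Prop
  | base (a b x y : ℤ) (h : a ≥ b - 1) : s23 a b x y (a + 1) b x (y + x)
  | step (a b x y a2 b2 x2 y2 : ℤ) (h : a ≤ b - 2)
      (ih : s23 (a + 1) b (x + a + 1) (y + x) a2 b2 x2 y2) :
      s23 a b x y a2 b2 x2 y2

/-- CHC encoding of the body of program P2. -/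
def s22 (a b x y a2 b2 x2 y2 : ℤ) : Prop :=
  (a ≥ b ∧ a2 = a ∧ b2 = b ∧ x2 = x ∧ y2 = y) ∨
  (a ≤ b - 1 ∧ s23 a b (x + a) y a2 b2 x2 y2)

/-- Input/output relation of program P1. -/
def s11 (a b x y x2 y2 : ℤ) : Prop := ∃ a2 b2, s12 a b x y a2 b2 x2 y2

/-- Input/output relation of program P2. -/
def s21 (a b x y x2 y2 : ℤ) : Prop := ∃ a2 b2, s22 a b x y a2 b2 x2 y2

lemma ico_split (a b : ℤ) (h : a < b) :
    (∑ i ∈ Finset.Ico a b, i) = a + ∑ i ∈ Finset.Ico (a+1) b, i := by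
  have : Finset.Ico a b = insert a (Finset.Ico (a+1) b) := by
    ext i; simp only [Finset.mem_Ico, Finset.mem_insert]; omega
  rw [this, Finset.sum_insert (by simp)]

lemma s12_x (a b x y a2 b2 x2 y2 : ℤ) (h : s12 a b x y a2 b2 x2 y2) :
    x2 = x + ∑ i ∈ Finset.Ico a b, i := by
  induction h with
  | base a b x y h => rw [Finset.Ico_eq_empty (by omega)]; simp
  | step a b x y a2 b2 x2 y2 h ih IH => rw [IH, ico_split a b (by omega)]; ring

lemma s23_x (a b x y a2 b2 x2 y2 : ℤ) (h : s23 a b x y a2 b2 x2 y2) :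
    x2 = x + ∑ i ∈ Finset.Ico (a+1) b, i := by
  induction h with
  | base a b x y h => rw [Finset.Ico_eq_empty (by omega)]; simp
  | step a b x y a2 b2 x2 y2 h ih IH =>
      rw [IH, ico_split (a+1) b (by omega)]; ring

/-- The paired predicate pp2 denotes the empty relation. -/
theorem pp2_empty (a b c d e f g h k m n o p : ℤ)
    (hab : a ≤ b - 1) (hk : k = a + c)
    (h1 : s12 a b c d e f g h) (h2 : s23 a b k d m n o p) : g ≥ o := by
  have hg := s12_x _ _ _ _ _ _ _ _ h1
  have ho := s23_x _ _ _ _ _ _ _ _ h2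
  rw [ico_split a b (by omega)] at hg
  omega
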